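/- Let f_1, …, f_n : ℝ^d → ℝ be twice differentiable and let x* be an interpolating minimizer, i.e., ∇f_i(x*) = 0 and ∇²f_i(x*) is positive definite for every i. Fix a batch size B, step size η > 0, and initial point x_0 ∈ ℝ^d. Let B* be a fixed batch of size B, and let x_t^{(B*)} denote the deterministic GD iterates on L̂_{B*} with step size η starting from x_0, i.e., x_{t+1}^{(B*)} = x_t^{(B*)} − η∇L̂_{B*}(x_t^{(B*)}). If ‖x_t^{(B*)} − x*‖^{1/t} → ∞ as t → ∞, then the SGD iterates x_t with step size η starting from x_0 satisfy E[‖x_t − x*‖] → ∞ as t → ∞. -/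

import Mathlib

open MeasureTheory ProbabilityTheory Filter
open scoped ENNReal

/-- Discrete measurable structure on batches (finite sets of sample indices). -/
instance finsetMeasurableSpace {α : Type*} : MeasurableSpace (Finset α) := ⊤

/-- The batch loss `L̂_B(x) = (1/B) ∑_{i ∈ B} f_i(x)`. -/
noncomputable def batchLoss {n d : ℕ} (f : Fin n → EuclideanSpace ℝ (Fin d) → ℝ) (B : ℕ)
    (S : Finset (Fin n)) (x : EuclideanSpace ℝ (Fin d)) : ℝ :=
  (B : ℝ)⁻¹ * ∑ i ∈ S, f i x

/-- A process driven by measurable batch choices through a pointwise recursion is measurable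
with finite range at every time. -/
lemma aux_meas_finite {Ω : Type*} [MeasurableSpace Ω] {n d : ℕ}
    (Bt : ℕ → Ω → Finset (Fin n)) (hmeas : ∀ t, Measurable (Bt t))
    (x : ℕ → Ω → EuclideanSpace ℝ (Fin d))
    (g : Finset (Fin n) → EuclideanSpace ℝ (Fin d) → EuclideanSpace ℝ (Fin d))
    (x0 : EuclideanSpace ℝ (Fin d)) (hinit : ∀ ω, x 0 ω = x0)
    (hstep : ∀ t ω, x (t + 1) ω = g (Bt t ω) (x t ω)) :
    ∀ t, Measurable (x t) ∧ (Set.range (x t)).Finite := by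
  intro t
  induction t with
  | zero =>
    constructor
    · have h : x 0 = fun _ => x0 := funext hinit
      rw [h]; exact measurable_const
    · have h : Set.range (x 0) ⊆ {x0} := by rintro _ ⟨ω, rfl⟩; simp [hinit]
      exact (Set.finite_singleton x0).subset h
  | succ t ih =>
    obtain ⟨hm, hfin⟩ := ih
    have hrange : (Set.range (x (t + 1))).Finite := by
      have h : Set.range (x (t + 1)) ⊆
          (fun p : Finset (Fin n) × EuclideanSpace ℝ (Fin d) => g p.1 p.2) ''
            (Set.univ ×ˢ Set.range (x t)) := by
        rintro _ ⟨ω, rfl⟩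
        exact ⟨(Bt t ω, x t ω), ⟨trivial, ⟨ω, rfl⟩⟩, (hstep t ω).symm⟩
      exact ((Set.finite_univ.prod hfin).image _).subset h
    refine ⟨fun E _ => ?_, hrange⟩
    have h : x (t + 1) ⁻¹' E =
        ⋃ S : Finset (Fin n),
          ((Bt t ⁻¹' {S}) ∩ x t ⁻¹' (g S ⁻¹' E ∩ Set.range (x t))) := by
      ext ω
      simp only [Set.mem_preimage, Set.mem_iUnion, Set.mem_inter_iff, Set.mem_singleton_iff]
      constructor
      · intro hω
        exact ⟨Bt t ω, rfl, by rw [← hstep t ω]; exact hω, ⟨ω, rfl⟩⟩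
      · rintro ⟨S, hS, hE', -⟩
        rw [hstep t ω, hS]; exact hE'
    rw [h]
    exact MeasurableSet.iUnion fun S =>
      ((hmeas t (by trivial)).inter (hm ((hfin.inter_of_right _).measurableSet)))

/-- **Necessary condition for stability of SGD (Theorem 2).**
Let `x*` be an interpolating minimizer of twice differentiable losses
`f₁, …, f_n`.  If GD with step size `η` on the fixed batch loss `L̂_{B*}` diverges
superlinearly from `x*` (i.e. `‖x_t^{(B*)} − x*‖^{1/t} → ∞`), then the SGD
iterates with uniformly random size-`B` batches, started at the same `x₀`,
diverge in expectation: `E[‖x_t − x*‖] → ∞`. -/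
theorem stmt4 {n d B : ℕ} (hB : 0 < B) (hBn : B ≤ n)
    (f : Fin n → EuclideanSpace ℝ (Fin d) → ℝ) (hf : ∀ i, ContDiff ℝ 2 (f i))
    (xstar : EuclideanSpace ℝ (Fin d))
    (hgrad : ∀ i, gradient (f i) xstar = 0)
    (hhess : ∀ i (u : EuclideanSpace ℝ (Fin d)), u ≠ 0 →
      0 < iteratedFDeriv ℝ 2 (f i) xstar ![u, u])
    (η : ℝ) (hη : 0 < η) (x0 : EuclideanSpace ℝ (Fin d))
    (Bstar : Finset (Fin n)) (hBstar : Bstar.card = B)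
    (y : ℕ → EuclideanSpace ℝ (Fin d)) (hy0 : y 0 = x0)
    (hystep : ∀ t, y (t + 1) = y t - η • gradient (batchLoss f B Bstar) (y t))
    (hdiv : Tendsto (fun t : ℕ => ‖y t - xstar‖ ^ (1 / (t : ℝ))) atTop atTop)
    {Ω : Type*} [MeasurableSpace Ω] (μ : Measure Ω) [IsProbabilityMeasure μ]
    (Bt : ℕ → Ω → Finset (Fin n)) (hmeas : ∀ t, Measurable (Bt t))
    (hindep : iIndepFun Bt μ)
    (hunif : ∀ t (S : Finset (Fin n)), μ {ω | Bt t ω = S} =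
      if S.card = B then ((n.choose B : ℝ≥0∞))⁻¹ else 0)
    (x : ℕ → Ω → EuclideanSpace ℝ (Fin d)) (hinit : ∀ ω, x 0 ω = x0)
    (hstep : ∀ t ω, x (t + 1) ω = x t ω - η • gradient (batchLoss f B (Bt t ω)) (x t ω)) :
    Tendsto (fun t : ℕ => ∫ ω, ‖x t ω - xstar‖ ∂μ) atTop atTop := by
  classical
  set q : ℝ := ((n.choose B : ℝ))⁻¹ with hqdef
  have hchoose : 0 < n.choose B := Nat.choose_pos hBn
  have hq : 0 < q := inv_pos.2 (by exact_mod_cast hchoose)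
  -- measurability and finite range of the iterates
  have hmf := aux_meas_finite Bt hmeas x
      (fun S z => z - η • gradient (batchLoss f B S) z) x0 hinit (fun t ω => hstep t ω)
  -- the event that the first t batches all equal Bstar
  set A : ℕ → Set Ω := fun t => ⋂ s ∈ Finset.range t, Bt s ⁻¹' {Bstar} with hAdef
  have hmuA : ∀ t, μ (A t) = ((n.choose B : ℝ≥0∞))⁻¹ ^ t := by
    intro t
    have h := (iIndepFun_iff_measure_inter_preimage_eq_mul.mp hindep) (Finset.range t)
      (sets := fun _ => ({Bstar} : Set (Finset (Fin n)))) (fun i _ => by trivial)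
    rw [hAdef]
    simp only
    rw [h]
    have hone : ∀ s : ℕ, μ (Bt s ⁻¹' {Bstar}) = ((n.choose B : ℝ≥0∞))⁻¹ := by
      intro s
      have heq : Bt s ⁻¹' {Bstar} = {ω | Bt s ω = Bstar} := rfl
      rw [heq, hunif s Bstar, if_pos hBstar]
    simp [hone, Finset.prod_const, Finset.card_range]
  -- on the event A t, the SGD iterate agrees with the GD iterate
  have hxy : ∀ t, ∀ ω ∈ A t, x t ω = y t := by
    intro t
    induction t with
    | zero => intro ω _; rw [hinit, hy0]
    | succ t ih =>
      intro ω hω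
      have hsub : ω ∈ A t := by
        refine Set.mem_iInter₂.mpr fun s hs => Set.mem_iInter₂.mp hω s ?_
        exact Finset.mem_range.mpr (Nat.lt_succ_of_lt (Finset.mem_range.mp hs))
      have hBt : Bt t ω = Bstar :=
        Set.mem_iInter₂.mp hω t (Finset.self_mem_range_succ t)
      rw [hstep t ω, hBt, ih ω hsub, hystep t]
  -- integrability
  have hint : ∀ t, Integrable (fun ω => ‖x t ω - xstar‖) μ := by
    intro t
    obtain ⟨hm, hfin⟩ := hmf t
    obtain ⟨C, hC⟩ := (hfin.image fun z => ‖z - xstar‖).bddAbove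
    refine (integrable_const C).mono'
      ((hm.sub measurable_const).norm).aestronglyMeasurable (ae_of_all _ fun ω => ?_)
    rw [norm_norm]
    exact hC ⟨x t ω, ⟨ω, rfl⟩, rfl⟩
  -- lower bound on the expectation
  have hlow : ∀ t, q ^ t * ‖y t - xstar‖ ≤ ∫ ω, ‖x t ω - xstar‖ ∂μ := by
    intro t
    have hAmeas : MeasurableSet (A t) :=
      MeasurableSet.biInter (Set.to_countable _) fun s _ => hmeas s (by trivial)
    have h1 : ∫ ω in A t, ‖x t ω - xstar‖ ∂μ = (μ (A t)).toReal * ‖y t - xstar‖ := by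
      rw [setIntegral_congr_fun hAmeas (g := fun _ => ‖y t - xstar‖)
        (fun ω hω => by rw [hxy t ω hω]), setIntegral_const, smul_eq_mul, Measure.real]
    have h2 : ∫ ω in A t, ‖x t ω - xstar‖ ∂μ ≤ ∫ ω, ‖x t ω - xstar‖ ∂μ :=
      setIntegral_le_integral (hint t) (ae_of_all _ fun ω => norm_nonneg _)
    have h3 : (μ (A t)).toReal = q ^ t := by
      rw [hmuA t, ENNReal.toReal_pow, ENNReal.toReal_inv, ENNReal.toReal_natCast]
    rw [h1, h3] at h2
    exact h2
  -- the lower bound tends to infinity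
  have hmain : Tendsto (fun t => q ^ t * ‖y t - xstar‖) atTop atTop := by
    rw [tendsto_atTop]
    intro b
    set M := max b 1 with hMdef
    have hM1 : (1 : ℝ) ≤ M := le_max_right _ _
    have hMq : 0 < M / q := div_pos (lt_of_lt_of_le one_pos hM1) hq
    filter_upwards [hdiv.eventually_ge_atTop (M / q), eventually_ge_atTop 1] with t ht ht1
    have ht0 : (t : ℝ) ≠ 0 := Nat.cast_ne_zero.mpr (by omega)
    have hr : (M / q) ^ t ≤ ‖y t - xstar‖ :=
      calc (M / q) ^ t ≤ (‖y t - xstar‖ ^ (1 / (t : ℝ))) ^ t :=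
            pow_le_pow_left₀ hMq.le ht t
        _ = ‖y t - xstar‖ := by
            rw [← Real.rpow_natCast (‖y t - xstar‖ ^ (1 / (t : ℝ))) t,
              ← Real.rpow_mul (norm_nonneg _), one_div, inv_mul_cancel₀ ht0, Real.rpow_one]
    calc b ≤ M := le_max_left _ _
      _ ≤ M ^ t := le_self_pow₀ hM1 (by omega)
      _ = q ^ t * (M / q) ^ t := by rw [← mul_pow]; congr 1; field_simp
      _ ≤ q ^ t * ‖y t - xstar‖ :=
          mul_le_mul_of_nonneg_left hr (pow_nonneg hq.le t)
  exact tendsto_atTop_mono hlow hmain
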